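/- Let π and σ be permutations of ℕ, let f̂(u) = |π(u) - σ(u)| and f̂_n* = max_{u ∈ [0,2^n)} f̂(u). Then Â_n^σ ⊆ ⋃_{v ∈ ℤ, |v| ≤ 4 f̂_n*} Â_n^π(v), and hence #Â_n^σ ≤ (8 f̂_n* + 1) · max_{|v| ≤ 4 f̂_n*} #Â_n^π(v), where Â_n^τ(v) = { (x,y,z) ∈ [0,2^n)³ : τ(x) + τ(y) - τ(z) + v = τ(x ⊕ y ⊕ z) } (equation in ℤ) and Â_n^σ = Â_n^σ(0). -/
import Mathlib


/-- `Ahat n τ v`: triples `(x,y,z) ∈ [0,2^n)³` with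
`τ(x) + τ(y) - τ(z) + v = τ(x ⊕ y ⊕ z)` in `ℤ`. -/
def Ahat (n : ℕ) (τ : ℕ → ℕ) (v : ℤ) : Finset (ℕ × ℕ × ℕ) :=
  (Finset.range (2 ^ n) ×ˢ Finset.range (2 ^ n) ×ˢ Finset.range (2 ^ n)).filter
    (fun p => (τ p.1 : ℤ) + τ p.2.1 - τ p.2.2 + v = τ (p.1 ^^^ p.2.1 ^^^ p.2.2))

theorem stmt_9 (π σ : ℕ → ℕ) (hπ : Function.Bijective π) (hσ : Function.Bijective σ)
    (n : ℕ) (fhat : ℕ → ℤ) (hf : ∀ u, fhat u = |(π u : ℤ) - σ u|)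
    (fstar : ℤ) (hfstar : fstar = ((Finset.range (2 ^ n)).sup
      (fun u => ((π u : ℤ) - σ u).natAbs) : ℕ)) :
    ((↑(Ahat n σ 0) : Set (ℕ × ℕ × ℕ)) ⊆
        ⋃ v ∈ {v : ℤ | |v| ≤ 4 * fstar}, (↑(Ahat n π v) : Set (ℕ × ℕ × ℕ))) ∧
    ∀ M : ℕ, (∀ v : ℤ, |v| ≤ 4 * fstar → (Ahat n π v).card ≤ M) →
      ((Ahat n σ 0).card : ℤ) ≤ (8 * fstar + 1) * M := by
  have hF0 : 0 ≤ fstar := by rw [hfstar]; positivity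
  have hb : ∀ u, u < 2 ^ n → |(π u : ℤ) - σ u| ≤ fstar := by
    intro u hu
    rw [Int.abs_eq_natAbs, hfstar]
    exact_mod_cast Finset.le_sup (f := fun u => ((π u : ℤ) - σ u).natAbs)
      (Finset.mem_range.mpr hu)
  have key : ∀ p ∈ Ahat n σ 0, ∃ v : ℤ, |v| ≤ 4 * fstar ∧ p ∈ Ahat n π v := by
    rintro ⟨x, y, z⟩ hp
    simp only [Ahat, Finset.mem_filter, Finset.mem_product, Finset.mem_range] at hp
    obtain ⟨⟨hx, hy, hz⟩, heq⟩ := hp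
    set w := x ^^^ y ^^^ z with hw
    have hwlt : w < 2 ^ n := Nat.xor_lt_two_pow (Nat.xor_lt_two_pow hx hy) hz
    refine ⟨(π w : ℤ) - ((π x : ℤ) + π y - π z), ?_, ?_⟩
    · have a1 := abs_le.mp (hb x hx)
      have a2 := abs_le.mp (hb y hy)
      have a3 := abs_le.mp (hb z hz)
      have a4 := abs_le.mp (hb w hwlt)
      have hs : (σ x : ℤ) + σ y - σ z = σ w := by
        simpa using heq
      have hrw : (π w : ℤ) - ((π x : ℤ) + π y - π z)
          = ((π w : ℤ) - σ w) - ((π x : ℤ) - σ x) - ((π y : ℤ) - σ y)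
            + ((π z : ℤ) - σ z) := by linarith
      rw [hrw, abs_le]
      constructor <;> linarith [a1.1, a1.2, a2.1, a2.2, a3.1, a3.2, a4.1, a4.2]
    · simp only [Ahat, Finset.mem_filter, Finset.mem_product, Finset.mem_range]
      exact ⟨⟨hx, hy, hz⟩, by ring⟩
  constructor
  · intro p hp
    obtain ⟨v, hv, hpv⟩ := key p (Finset.mem_coe.mp hp)
    exact Set.mem_iUnion₂.mpr ⟨v, hv, hpv⟩
  · intro M hM
    have hsub : Ahat n σ 0 ⊆ (Finset.Icc (-(4 * fstar)) (4 * fstar)).biUnion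
        (fun v => Ahat n π v) := by
      intro p hp
      obtain ⟨v, hv, hpv⟩ := key p hp
      exact Finset.mem_biUnion.mpr ⟨v, Finset.mem_Icc.mpr (abs_le.mp hv), hpv⟩
    have h1 : (Ahat n σ 0).card
        ≤ ∑ v ∈ Finset.Icc (-(4 * fstar)) (4 * fstar), (Ahat n π v).card :=
      (Finset.card_le_card hsub).trans Finset.card_biUnion_le
    have h2 : ∑ v ∈ Finset.Icc (-(4 * fstar)) (4 * fstar), (Ahat n π v).card
        ≤ (Finset.Icc (-(4 * fstar)) (4 * fstar)).card * M := by
      have := Finset.sum_le_card_nsmul (Finset.Icc (-(4 * fstar)) (4 * fstar))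
        (fun v => (Ahat n π v).card) M
        (fun v hv => hM v (abs_le.mpr (Finset.mem_Icc.mp hv)))
      simpa [smul_eq_mul] using this
    have hcard : (((Finset.Icc (-(4 * fstar)) (4 * fstar)).card : ℕ) : ℤ)
        = 8 * fstar + 1 := by
      rw [Int.card_Icc, Int.toNat_of_nonneg (by linarith)]
      ring
    have h3 := h1.trans h2
    calc ((Ahat n σ 0).card : ℤ)
        ≤ (((Finset.Icc (-(4 * fstar)) (4 * fstar)).card * M : ℕ) : ℤ) := by
          exact_mod_cast h3
      _ = (8 * fstar + 1) * M := by push_cast [hcard]; ring
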